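/- (Uniqueness of the isoradial weight function) Let 0 < q < 4 and r = arccos(√q/2). Suppose f : (0, π/2) → (0, ∞) is continuous and satisfies: (i) f(θ)·f(π/2 − θ) = q for all θ ∈ (0, π/2), and (ii) f(θ_a)f(θ_b) + f(θ_a)f(θ_c) + f(θ_b)f(θ_c) + f(θ_a)f(θ_b)f(θ_c) = q for all θ_a, θ_b, θ_c ∈ (0, π/2) with θ_a + θ_b + θ_c = π/2. Then f(θ) = √q·sin((2r/π)·θ) / sin((2r/π)·(π/2 − θ)) for all θ ∈ (0, π/2). -/

import Mathlib

open Real Set Filter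

private lemma trigL2 (r α β : ℝ) :
    sin α * sin (r - β) + sin β * sin (r - α) + 2 * cos r * (sin α * sin β)
      = sin r * sin (α + β) := by
  rw [sin_sub, sin_sub, sin_add]; ring

private lemma trigL1 (r α β : ℝ) :
    sin (r - α) * sin (r - β) - sin α * sin β = sin r * sin (r - (α + β)) := by
  rw [sin_sub, sin_sub, sin_sub, cos_add, sin_add]
  linear_combination (sin α * sin β) * (sin_sq_add_cos_sq r)

private lemma unique_aux (q : ℝ) (hq : 0 < q) (F G : ℝ → ℝ)
    (hFpos : ∀ θ ∈ Ioo 0 (π/2), 0 < F θ)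
    (hGpos : ∀ θ ∈ Ioo 0 (π/2), 0 < G θ)
    (hFcont : ContinuousOn F (Ioo 0 (π/2)))
    (hGcont : ContinuousOn G (Ioo 0 (π/2)))
    (hF4 : F (π/4) = G (π/4))
    (hFadd : ∀ a ∈ Ioo 0 (π/2), ∀ b ∈ Ioo 0 (π/2), a + b < π/2 →
      F a * F b < q ∧ F (a+b) * (q - F a * F b) = q * (F a + F b + F a * F b))
    (hGadd : ∀ a ∈ Ioo 0 (π/2), ∀ b ∈ Ioo 0 (π/2), a + b < π/2 →
      G a * G b < q ∧ G (a+b) * (q - G a * G b) = q * (G a + G b + G a * G b)) :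
    ∀ θ ∈ Ioo 0 (π/2), F θ = G θ := by
  have hpi := Real.pi_pos
  -- the addition step
  have addEq : ∀ a ∈ Ioo 0 (π/2), ∀ b ∈ Ioo 0 (π/2), a + b < π/2 →
      F a = G a → F b = G b → F (a+b) = G (a+b) := by
    intro a ha b hb hab hea heb
    obtain ⟨hlt, he⟩ := hFadd a ha b hb hab
    obtain ⟨hlt', he'⟩ := hGadd a ha b hb hab
    rw [← hea, ← heb] at he' hlt'
    have hne : q - F a * F b ≠ 0 := by linarith
    exact mul_right_cancel₀ hne (he.trans he'.symm)
  -- the halving step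
  have half : ∀ θ ∈ Ioo 0 (π/2), F θ = G θ → F (θ/2) = G (θ/2) := by
    intro θ hθ heq
    have hθ2 : θ/2 ∈ Ioo 0 (π/2) := ⟨by linarith [hθ.1], by linarith [hθ.2]⟩
    have hsum : θ/2 + θ/2 < π/2 := by linarith [hθ.2]
    obtain ⟨hlt, he⟩ := hFadd (θ/2) hθ2 (θ/2) hθ2 hsum
    obtain ⟨hlt', he'⟩ := hGadd (θ/2) hθ2 (θ/2) hθ2 hsum
    have hh : θ/2 + θ/2 = θ := by ring
    rw [hh] at he he'
    rw [heq] at he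
    set a := F (θ/2) with ha
    set b := G (θ/2) with hb
    have hapos : 0 < a := hFpos _ hθ2
    have hbpos : 0 < b := hGpos _ hθ2
    have hy : 0 < G θ := hGpos _ hθ
    have key : (a - b) * ((a + b) * (G θ + q) + 2*q) = 0 := by
      linear_combination he' - he
    rcases mul_eq_zero.1 key with h | h
    · linarith
    · nlinarith
  -- dyadic points of level n
  have base : ∀ n : ℕ, π/2^(n+2) ∈ Ioo 0 (π/2) ∧ F (π/2^(n+2)) = G (π/2^(n+2)) := by
    intro n
    induction n with
    | zero =>
      refine ⟨⟨by positivity, by norm_num; linarith⟩, ?_⟩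
      norm_num
      exact hF4
    | succ n ih =>
      have h2 : π/2^(n+1+2) = (π/2^(n+2))/2 := by ring
      rw [h2]
      obtain ⟨hmem, heq⟩ := ih
      refine ⟨⟨by positivity, by linarith [hmem.2, hmem.1]⟩, half _ hmem heq⟩
  have mul : ∀ n : ℕ, ∀ m : ℕ, 1 ≤ m → (m:ℝ) * (π/2^(n+2)) < π/2 →
      (m:ℝ) * (π/2^(n+2)) ∈ Ioo 0 (π/2) ∧
        F ((m:ℝ) * (π/2^(n+2))) = G ((m:ℝ) * (π/2^(n+2))) := by
    intro n m
    induction m with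
    | zero => intro h; exact absurd h (by omega)
    | succ m ih =>
      intro _ hlt
      rcases Nat.eq_zero_or_pos m with rfl | hm
      · have hb := base n
        have hone : ((0 + 1 : ℕ) : ℝ) * (π/2^(n+2)) = π/2^(n+2) := by norm_num
        rw [hone]
        exact hb
      · have hδ : 0 < π/2^(n+2) := by positivity
        have hlt' : (m:ℝ) * (π/2^(n+2)) < π/2 := by
          have : (m:ℝ) ≤ (m:ℝ) + 1 := by linarith
          push_cast at hlt ⊢
          nlinarith
        obtain ⟨hmem, heq⟩ := ih hm hlt'
        have hsum : (m:ℝ) * (π/2^(n+2)) + π/2^(n+2) < π/2 := by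
          push_cast at hlt; linarith
        have hmem2 : ((m:ℝ)+1) * (π/2^(n+2)) ∈ Ioo 0 (π/2) := by
          constructor
          · positivity
          · push_cast at hlt; linarith
        have := addEq _ hmem _ (base n).1 hsum heq (base n).2
        have hr : (m:ℝ) * (π/2^(n+2)) + π/2^(n+2) = ((m:ℕ)+1 : ℕ) * (π/2^(n+2)) := by
          push_cast; ring
        rw [hr] at this
        constructor
        · push_cast at hmem2 ⊢; exact hmem2
        · push_cast at this ⊢; exact this
  -- density + continuity
  intro θ hθ
  set x : ℕ → ℝ := fun n => (⌊θ * 2^(n+2) / π⌋₊ : ℝ) * (π / 2^(n+2)) with hx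
  have hθ0 := hθ.1
  have hθ2 := hθ.2
  have hev1 : ∀ᶠ n : ℕ in atTop, (1:ℝ) ≤ θ * 2^(n+2) / π := by
    have h2 : Tendsto (fun n : ℕ => (2:ℝ)^(n+2)) atTop atTop := by
      apply Tendsto.comp (tendsto_pow_atTop_atTop_of_one_lt (by norm_num : (1:ℝ) < 2))
      exact tendsto_add_atTop_nat 2
    have := h2.eventually_ge_atTop (π/θ)
    filter_upwards [this] with n hn
    rw [div_le_iff₀ hθ0] at hn
    rw [le_div_iff₀ hpi]
    linarith
  have hbound : ∀ n : ℕ, x n ≤ θ := by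
    intro n
    have h1 : (⌊θ * 2^(n+2) / π⌋₊ : ℝ) ≤ θ * 2^(n+2) / π := Nat.floor_le (by positivity)
    calc x n ≤ (θ * 2^(n+2) / π) * (π / 2^(n+2)) := by
          apply mul_le_mul_of_nonneg_right h1 (by positivity)
      _ = θ := by field_simp
  have hbound2 : ∀ n : ℕ, θ - π/2^(n+2) < x n := by
    intro n
    have h1 : θ * 2^(n+2) / π < ⌊θ * 2^(n+2) / π⌋₊ + 1 := Nat.lt_floor_add_one _
    have h2 : (0:ℝ) < π / 2^(n+2) := by positivity
    have := mul_lt_mul_of_pos_right h1 h2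
    have heq1 : (θ * 2^(n+2) / π) * (π / 2^(n+2)) = θ := by field_simp
    rw [heq1] at this
    simp only [hx]
    nlinarith
  have hxmem : ∀ᶠ n : ℕ in atTop, x n ∈ Ioo 0 (π/2) ∧ F (x n) = G (x n) := by
    filter_upwards [hev1] with n hn
    have hm1 : 1 ≤ ⌊θ * 2^(n+2) / π⌋₊ := Nat.le_floor (by exact_mod_cast hn)
    have hlt : x n < π/2 := lt_of_le_of_lt (hbound n) hθ2
    exact ⟨⟨(mul n _ hm1 hlt).1.1, hlt⟩, (mul n _ hm1 hlt).2⟩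
  have hxtend : Tendsto x atTop (nhds θ) := by
    have hlow : Tendsto (fun n : ℕ => θ - π/2^(n+2)) atTop (nhds θ) := by
      have h0 : Tendsto (fun n : ℕ => π/2^(n+2)) atTop (nhds 0) := by
        have : Tendsto (fun n : ℕ => (2:ℝ)^(n+2)) atTop atTop := by
          apply Tendsto.comp (tendsto_pow_atTop_atTop_of_one_lt (by norm_num : (1:ℝ) < 2))
          exact tendsto_add_atTop_nat 2
        exact Tendsto.div_atTop tendsto_const_nhds this
      have := Tendsto.const_sub θ h0
      simpa using this
    apply tendsto_of_tendsto_of_tendsto_of_le_of_le' hlow tendsto_const_nhds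
    · filter_upwards with n; exact (hbound2 n).le
    · filter_upwards with n; exact hbound n
  have hFc : ContinuousAt F θ := hFcont.continuousAt (isOpen_Ioo.mem_nhds hθ)
  have hGc : ContinuousAt G θ := hGcont.continuousAt (isOpen_Ioo.mem_nhds hθ)
  have hFt : Tendsto (fun n => F (x n)) atTop (nhds (F θ)) := hFc.tendsto.comp hxtend
  have hGt : Tendsto (fun n => G (x n)) atTop (nhds (G θ)) := hGc.tendsto.comp hxtend
  have heq : (fun n => F (x n)) =ᶠ[atTop] (fun n => G (x n)) := by
    filter_upwards [hxmem] with n hn; exact hn.2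
  exact tendsto_nhds_unique (hFt.congr' heq) hGt

/-- Uniqueness of the isoradial weight function: for 0 < q < 4, any continuous positive
function f on (0, π/2) satisfying the duality relation f(θ)·f(π/2-θ) = q and the Y–Δ
solvability relation f(θ_a)f(θ_b) + f(θ_a)f(θ_c) + f(θ_b)f(θ_c) + f(θ_a)f(θ_b)f(θ_c) = q
whenever θ_a + θ_b + θ_c = π/2, is given by
f(θ) = √q·sin((2r/π)θ)/sin((2r/π)(π/2-θ)) with r = arccos(√q/2). -/
theorem isoradialWeight_unique (q : ℝ) (hq0 : 0 < q) (hq4 : q < 4) (f : ℝ → ℝ)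
    (hpos : ∀ θ ∈ Set.Ioo 0 (Real.pi / 2), 0 < f θ)
    (hcont : ContinuousOn f (Set.Ioo 0 (Real.pi / 2)))
    (hdual : ∀ θ ∈ Set.Ioo 0 (Real.pi / 2), f θ * f (Real.pi / 2 - θ) = q)
    (hydelta : ∀ θa ∈ Set.Ioo 0 (Real.pi / 2), ∀ θb ∈ Set.Ioo 0 (Real.pi / 2),
      ∀ θc ∈ Set.Ioo 0 (Real.pi / 2), θa + θb + θc = Real.pi / 2 →
      f θa * f θb + f θa * f θc + f θb * f θc + f θa * f θb * f θc = q) :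
    ∀ θ ∈ Set.Ioo 0 (Real.pi / 2),
      f θ = Real.sqrt q *
        Real.sin ((2 * Real.arccos (Real.sqrt q / 2) / Real.pi) * θ) /
        Real.sin ((2 * Real.arccos (Real.sqrt q / 2) / Real.pi) * (Real.pi / 2 - θ)) := by
  have hpi := Real.pi_pos
  set s := Real.sqrt q with hs
  have hspos : 0 < s := Real.sqrt_pos.2 hq0
  have hs2 : s < 2 := by
    have h4 : Real.sqrt 4 = 2 := by
      rw [show (4:ℝ) = 2^2 by norm_num, Real.sqrt_sq (by norm_num)]
    calc s < Real.sqrt 4 := Real.sqrt_lt_sqrt hq0.le hq4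
      _ = 2 := h4
  have hsq : s^2 = q := Real.sq_sqrt hq0.le
  set r := Real.arccos (s/2) with hr
  have hr0 : 0 < r := Real.arccos_pos.2 (by linarith)
  have hcos : Real.cos r = s/2 := Real.cos_arccos (by linarith) (by linarith)
  have hr2 : r < π/2 := by
    by_contra h
    push_neg at h
    have : Real.cos r ≤ 0 := Real.cos_nonpos_of_pi_div_two_le_of_le h
      (by linarith [Real.arccos_le_pi (s/2)])
    linarith
  have hsinr : 0 < Real.sin r := Real.sin_pos_of_pos_of_lt_pi hr0 (by linarith)
  set k := 2 * r / π with hk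
  have hkpos : 0 < k := by positivity
  have hkh : k * (π/2) = r := by field_simp [hk]; rw [hk]; field_simp
  have hK2 : ∀ x : ℝ, k * (π/2 - x) = r - k * x := by
    intro x; rw [mul_sub, hkh]
  have hsinpos : ∀ x : ℝ, 0 < x → x < r → 0 < Real.sin x := by
    intro x h1 h2; exact Real.sin_pos_of_pos_of_lt_pi h1 (by linarith)
  set G : ℝ → ℝ := fun θ => s * Real.sin (k * θ) / Real.sin (k * (π/2 - θ)) with hG
  have hmem : ∀ θ ∈ Ioo 0 (π/2), 0 < k * θ ∧ k * θ < r := by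
    intro θ hθ
    constructor
    · exact mul_pos hkpos hθ.1
    · calc k * θ < k * (π/2) := by
            exact mul_lt_mul_of_pos_left hθ.2 hkpos
        _ = r := hkh
  have hGpos : ∀ θ ∈ Ioo 0 (π/2), 0 < G θ := by
    intro θ hθ
    obtain ⟨h1, h2⟩ := hmem θ hθ
    have hn : 0 < Real.sin (k * θ) := hsinpos _ h1 h2
    have hd : 0 < Real.sin (k * (π/2 - θ)) := by
      rw [hK2]; exact hsinpos _ (by linarith) (by linarith)
    exact div_pos (mul_pos hspos hn) hd
  have hGcont : ContinuousOn G (Ioo 0 (π/2)) := by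
    apply ContinuousOn.div
    · exact (continuous_const.mul (Real.continuous_sin.comp
        (continuous_const.mul continuous_id))).continuousOn
    · exact (Real.continuous_sin.comp
        (continuous_const.mul (continuous_const.sub continuous_id))).continuousOn
    · intro θ hθ
      obtain ⟨h1, h2⟩ := hmem θ hθ
      have : 0 < Real.sin (k * (π/2 - θ)) := by
        rw [hK2]; exact hsinpos _ (by linarith) (by linarith)
      exact ne_of_gt this
  have hG4 : G (π/4) = s := by
    have h1 : k * (π/4) = r/2 := by field_simp [hk]; linear_combination 4 * hkh
    have h2 : k * (π/2 - π/4) = r/2 := by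
      rw [hK2, h1]; ring
    rw [hG]
    simp only
    rw [h1, h2, mul_div_assoc, div_self (ne_of_gt (hsinpos _ (by linarith) (by linarith)))]
    ring
  have hGadd : ∀ a ∈ Ioo 0 (π/2), ∀ b ∈ Ioo 0 (π/2), a + b < π/2 →
      G a * G b < q ∧ G (a+b) * (q - G a * G b) = q * (G a + G b + G a * G b) := by
    intro a ha b hb hab
    obtain ⟨hα1, hα2⟩ := hmem a ha
    obtain ⟨hβ1, hβ2⟩ := hmem b hb
    have habk : k * (a+b) < r := by
      calc k * (a+b) < k * (π/2) := mul_lt_mul_of_pos_left hab hkpos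
        _ = r := hkh
    have hA : 0 < Real.sin (r - k*a) := hsinpos _ (by linarith) (by linarith)
    have hB : 0 < Real.sin (r - k*b) := hsinpos _ (by linarith) (by linarith)
    have hC : 0 < Real.sin (r - (k*a + k*b)) := by
      apply hsinpos _ _ (by linarith)
      have : k*a + k*b = k*(a+b) := by ring
      rw [this]; linarith
    have hsa : 0 < Real.sin (k*a) := hsinpos _ hα1 hα2
    have hsb : 0 < Real.sin (k*b) := hsinpos _ hβ1 hβ2
    have hGa : G a = s * Real.sin (k*a) / Real.sin (r - k*a) := by
      rw [hG]; simp only; rw [hK2]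
    have hGb : G b = s * Real.sin (k*b) / Real.sin (r - k*b) := by
      rw [hG]; simp only; rw [hK2]
    have hGab : G (a+b) = s * Real.sin (k*a + k*b) / Real.sin (r - (k*a + k*b)) := by
      rw [hG]; simp only; rw [hK2]
      have : k * (a+b) = k*a + k*b := by ring
      rw [this]
    have key : q - G a * G b
        = q * (Real.sin r * Real.sin (r - (k*a + k*b)))
          / (Real.sin (r - k*a) * Real.sin (r - k*b)) := by
      rw [hGa, hGb]
      field_simp
      rw [show k * (a + b) = k * a + k * b by ring]
      linear_combination (-(Real.sin (k*a) * Real.sin (k*b))) * hsq + q * trigL1 r (k*a) (k*b)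
    constructor
    · have hpos2 : 0 < q * (Real.sin r * Real.sin (r - (k*a + k*b)))
          / (Real.sin (r - k*a) * Real.sin (r - k*b)) := by positivity
      linarith [key]
    · rw [key, hGa, hGb, hGab]
      have h2c : s = 2 * Real.cos r := by rw [hcos]; ring
      have hC' := hC
      rw [show k*a + k*b = k*(a+b) by ring] at hC'
      field_simp
      rw [show k * (a + b) = k * a + k * b by ring]
      linear_combination (-1) * trigL2 r (k*a) (k*b) + (-(Real.sin (k*a)*Real.sin (k*b))) * h2c
  -- f(π/4) = s
  have h4mem : π/4 ∈ Ioo 0 (π/2) := ⟨by linarith, by linarith⟩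
  have hf4 : f (π/4) = s := by
    have h := hdual (π/4) h4mem
    have he : π/2 - π/4 = π/4 := by ring
    rw [he] at h
    have := Real.sqrt_mul_self (hpos _ h4mem).le
    rw [h] at this
    rw [← hs] at this
    exact this.symm
  have hF4 : f (π/4) = G (π/4) := by rw [hf4, hG4]
  -- addition law for f
  have hFadd : ∀ a ∈ Ioo 0 (π/2), ∀ b ∈ Ioo 0 (π/2), a + b < π/2 →
      f a * f b < q ∧ f (a+b) * (q - f a * f b) = q * (f a + f b + f a * f b) := by
    intro a ha b hb hab
    have hcmem : π/2 - (a+b) ∈ Ioo 0 (π/2) := ⟨by linarith, by linarith [ha.1, hb.1]⟩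
    have h1 := hydelta a ha b hb (π/2 - (a+b)) hcmem (by ring)
    have h2 := hdual (π/2 - (a+b)) hcmem
    have he : π/2 - (π/2 - (a+b)) = a + b := by ring
    rw [he] at h2
    have hApos := hpos a ha
    have hBpos := hpos b hb
    have hCpos := hpos _ hcmem
    constructor
    · nlinarith [mul_pos hApos hCpos, mul_pos hBpos hCpos,
        mul_pos (mul_pos hApos hBpos) hCpos]
    · linear_combination (-(f (a+b))) * h1 + (f a + f b + f a * f b) * h2
  exact unique_aux q hq0 f G hpos hGpos hcont hGcont hF4 hFadd hGadd
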